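/- (Theorem 2, forward direction) Let K ≥ 2 and J ≥ 1 be integers with 2J ≤ K. Let (ν_Q, λ_Q) and (ν_R, λ_R) be two J-class latent class models in Q_J (weights nonnegative summing to 1, class probabilities in (0,1], and λ_{jk} ≠ λ_{j'k} for every coordinate k whenever j ≠ j'). If there exists A > 0 such that m_{Q,h} = A·m_{R,h} for all h ∈ H*, then A = 1 and consequently π_{Q,0} = π_{R,0}. -/

import Mathlib

open Finset

/-- The set `H* = {0,1}^K \ {0}` of nonzero binary inclusion patterns. -/
def Hstar (K : ℕ) : Finset (Fin K → Bool) :=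
  Finset.univ.filter (fun h => h ≠ fun _ => false)

/-- Cell probability `π_h = Σ_j ν_j ∏_k λ_{jk}^{h_k} (1-λ_{jk})^{1-h_k}` of a
    `J`-class latent class model. -/
def lcmCellProb {J K : ℕ} (ν : Fin J → ℝ) (lam : Fin J → Fin K → ℝ)
    (h : Fin K → Bool) : ℝ :=
  ∑ j, ν j * ∏ k, (if h k then lam j k else 1 - lam j k)

/-- Mixed moment `m_h = Σ_j ν_j ∏_k λ_{jk}^{h_k}` of a `J`-class latent class
    model. -/
def lcmMoment {J K : ℕ} (ν : Fin J → ℝ) (lam : Fin J → Fin K → ℝ)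
    (h : Fin K → Bool) : ℝ :=
  ∑ j, ν j * ∏ k, (if h k then lam j k else 1)

/-- Membership in the family `Q_J`: nonnegative weights summing to one, class
    probabilities in `(0,1]`, and coordinatewise distinct class probabilities. -/
def memQJ {J K : ℕ} (ν : Fin J → ℝ) (lam : Fin J → Fin K → ℝ) : Prop :=
  (∀ j, 0 ≤ ν j) ∧ (∑ j, ν j = 1) ∧
    (∀ j k, lam j k ∈ Set.Ioc (0 : ℝ) 1) ∧
    (∀ j j', j ≠ j' → ∀ k, lam j k ≠ lam j' k)

lemma sum_prod_bool {K : ℕ} (F : Fin K → Bool → ℝ) :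
    ∑ h : Fin K → Bool, ∏ k, F k (h k) = ∏ k, (F k true + F k false) := by
  calc ∑ h : Fin K → Bool, ∏ k, F k (h k)
      = ∑ h ∈ Fintype.piFinset (fun _ : Fin K => (univ : Finset Bool)), ∏ k, F k (h k) := by
        rw [Fintype.piFinset_univ]
    _ = ∏ k, ∑ b : Bool, F k b := (Finset.prod_univ_sum _ _).symm
    _ = ∏ k, (F k true + F k false) := by
        refine Finset.prod_congr rfl fun k _ => ?_
        simp [Fintype.sum_bool]

/-- Generating-function identity. -/
lemma gen_identity {J K : ℕ} (ν : Fin J → ℝ) (lam : Fin J → Fin K → ℝ)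
    (t : Fin K → ℝ) :
    ∑ h : Fin K → Bool, (∏ k, (if h k then t k else 1)) * lcmMoment ν lam h
      = ∑ j, ν j * ∏ k, (t k * lam j k + 1) := by
  simp only [lcmMoment, Finset.mul_sum]
  rw [Finset.sum_comm]
  refine Finset.sum_congr rfl fun j _ => ?_
  have h1 : ∀ h : Fin K → Bool,
      (∏ k, (if h k then t k else 1)) * (ν j * ∏ k, (if h k then lam j k else 1))
        = ν j * ∏ k, (if h k then t k * lam j k else 1) := by
    intro h
    rw [mul_comm, mul_assoc, ← Finset.prod_mul_distrib]
    congr 1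
    refine Finset.prod_congr rfl fun k _ => ?_
    by_cases hk : h k <;> simp [hk, mul_comm]
  simp only [h1]
  rw [← Finset.mul_sum]
  congr 1
  have := sum_prod_bool (fun k b => if b then t k * lam j k else 1)
  simpa using this

/-- Sum over all patterns splits as the zero pattern plus `Hstar`. -/
lemma sum_split {K : ℕ} (f : (Fin K → Bool) → ℝ) :
    ∑ h : Fin K → Bool, f h = f (fun _ => false) + ∑ h ∈ Hstar K, f h := by
  have : Hstar K = (univ : Finset (Fin K → Bool)).erase (fun _ => false) := by
    ext h; simp [Hstar]
  rw [this, ← Finset.add_sum_erase _ f (Finset.mem_univ _)]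

lemma moment_zero {J K : ℕ} (ν : Fin J → ℝ) (lam : Fin J → Fin K → ℝ)
    (hs : ∑ j, ν j = 1) : lcmMoment ν lam (fun _ => false) = 1 := by
  simp [lcmMoment, hs]

theorem lcm_identifiable_of_two_mul_le (K J : ℕ) (hK : 2 ≤ K) (hJ : 1 ≤ J)
    (hJK : 2 * J ≤ K)
    (νQ νR : Fin J → ℝ) (lamQ lamR : Fin J → Fin K → ℝ)
    (hQ : memQJ νQ lamQ) (hR : memQJ νR lamR)
    (A : ℝ) (hA : 0 < A)
    (hm : ∀ h ∈ Hstar K, lcmMoment νQ lamQ h = A * lcmMoment νR lamR h) :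
    A = 1 ∧ lcmCellProb νQ lamQ (fun _ => false) =
      lcmCellProb νR lamR (fun _ => false) := by
  obtain ⟨hQ0, hQ1, hQ2, -⟩ := hQ
  obtain ⟨hR0, hR1, hR2, -⟩ := hR
  -- the key relation for any t
  have key : ∀ t : Fin K → ℝ,
      (∑ j, νQ j * ∏ k, (t k * lamQ j k + 1)) - 1
        = A * ((∑ j, νR j * ∏ k, (t k * lamR j k + 1)) - 1) := by
    intro t
    have eQ := gen_identity νQ lamQ t
    have eR := gen_identity νR lamR t
    rw [sum_split] at eQ eR
    have c0 : (∏ k : Fin K, (if (fun _ => false) k then t k else 1)) = 1 := by simp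
    rw [c0, one_mul, moment_zero _ _ hQ1] at eQ
    rw [c0, one_mul, moment_zero _ _ hR1] at eR
    have hsum : ∑ h ∈ Hstar K, (∏ k, (if h k then t k else 1)) * lcmMoment νQ lamQ h
        = A * ∑ h ∈ Hstar K, (∏ k, (if h k then t k else 1)) * lcmMoment νR lamR h := by
      rw [Finset.mul_sum]
      refine Finset.sum_congr rfl fun h hh => ?_
      rw [hm h hh]; ring
    linear_combination hsum - eQ + A * eR
  -- choose the killing vector t
  have hA1 : A = 1 := by
    set t : Fin K → ℝ := fun k =>
      if hk : (k : ℕ) < J then -(lamQ ⟨(k : ℕ), hk⟩ k)⁻¹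
      else if hk2 : (k : ℕ) - J < J then -(lamR ⟨(k : ℕ) - J, hk2⟩ k)⁻¹ else 0
      with ht
    have hQzero : (∑ j, νQ j * ∏ k, (t k * lamQ j k + 1)) = 0 := by
      refine Finset.sum_eq_zero fun j _ => ?_
      have hjK : (j : ℕ) < K := lt_of_lt_of_le (by omega) hJK
      set k0 : Fin K := ⟨(j : ℕ), hjK⟩ with hk0
      have hfac : t k0 * lamQ j k0 + 1 = 0 := by
        have hlt : ((k0 : ℕ)) < J := j.isLt
        have ht0 : t k0 = -(lamQ ⟨(k0 : ℕ), hlt⟩ k0)⁻¹ := by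
          rw [ht]; exact dif_pos hlt
        have hje : (⟨(k0 : ℕ), hlt⟩ : Fin J) = j := by
          apply Fin.ext; rfl
        rw [ht0, hje]
        have hne : lamQ j k0 ≠ 0 := ne_of_gt (hQ2 j k0).1
        field_simp
        norm_num
      rw [Finset.prod_eq_zero (Finset.mem_univ k0) hfac, mul_zero]
    have hRzero : (∑ j, νR j * ∏ k, (t k * lamR j k + 1)) = 0 := by
      refine Finset.sum_eq_zero fun j _ => ?_
      have hjK : J + (j : ℕ) < K := lt_of_lt_of_le (by omega) hJK
      set k0 : Fin K := ⟨J + (j : ℕ), hjK⟩ with hk0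
      have hfac : t k0 * lamR j k0 + 1 = 0 := by
        have hnlt : ¬ ((k0 : ℕ) < J) := by simp [hk0]
        have hlt2 : (k0 : ℕ) - J < J := by
          have : (k0 : ℕ) = J + (j : ℕ) := rfl
          omega
        have ht0 : t k0 = -(lamR ⟨(k0 : ℕ) - J, hlt2⟩ k0)⁻¹ := by
          rw [ht]; exact (dif_neg hnlt).trans (dif_pos hlt2)
        have hje : (⟨(k0 : ℕ) - J, hlt2⟩ : Fin J) = j := by
          apply Fin.ext
          show (J + (j : ℕ)) - J = (j : ℕ)
          omega
        rw [ht0, hje]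
        have hne : lamR j k0 ≠ 0 := ne_of_gt (hR2 j k0).1
        field_simp
        norm_num
      rw [Finset.prod_eq_zero (Finset.mem_univ k0) hfac, mul_zero]
    have := key t
    rw [hQzero, hRzero] at this
    have : A = 1 := by linarith
    exact this
  refine ⟨hA1, ?_⟩
  -- cell probabilities at the zero pattern
  have cell_eq : ∀ (ν : Fin J → ℝ) (lam : Fin J → Fin K → ℝ),
      lcmCellProb ν lam (fun _ => false)
        = ∑ j, ν j * ∏ k, ((-1 : ℝ) * lam j k + 1) := by
    intro ν lam
    simp only [lcmCellProb, if_neg Bool.false_ne_true]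
    refine Finset.sum_congr rfl fun j _ => ?_
    congr 1
    refine Finset.prod_congr rfl fun k _ => ?_
    simp; ring
  have := key (fun _ => -1)
  rw [hA1, one_mul] at this
  rw [cell_eq, cell_eq]
  linarith [this]
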